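/- arXiv:2507.04637 — 3 statements merged into one kernel-verified Lean document; each statement's English description precedes it below -/
import Mathlib

section
/- Let α, β > 0, let ψ : (0,∞) → ℝ be such that Ψ(x) := ψ(e^x) is monotone nondecreasing and convex, and let p, q be nonnegative measurable functions on a measure space with all the relevant integrals finite and positive. Then (1/(β(α+β)))·ψ(∫ p^(α+β)) + (1/(α(α+β)))·ψ(∫ q^(α+β)) − (1/(αβ))·ψ(∫ p^α q^β) ≥ 0. -/
open Real MeasureTheory

theorem gab_nonneg_pos_case
    {A : Type*} [MeasurableSpace A] (μ : Measure A)
    (α β : ℝ) (hα : 0 < α) (hβ : 0 < β)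
    (ψ : ℝ → ℝ)
    (hΨmono : Monotone (fun x : ℝ => ψ (Real.exp x)))
    (hΨconv : ConvexOn ℝ Set.univ (fun x : ℝ => ψ (Real.exp x)))
    (p q : A → ℝ) (hp : Measurable p) (hq : Measurable q)
    (hp0 : ∀ a, 0 ≤ p a) (hq0 : ∀ a, 0 ≤ q a)
    (hpint : Integrable (fun a => p a ^ (α + β)) μ)
    (hqint : Integrable (fun a => q a ^ (α + β)) μ)
    (hpqint : Integrable (fun a => p a ^ α * q a ^ β) μ)
    (hppos : 0 < ∫ a, p a ^ (α + β) ∂μ)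
    (hqpos : 0 < ∫ a, q a ^ (α + β) ∂μ)
    (hpqpos : 0 < ∫ a, p a ^ α * q a ^ β ∂μ) :
    0 ≤ (1 / (β * (α + β))) * ψ (∫ a, p a ^ (α + β) ∂μ)
        + (1 / (α * (α + β))) * ψ (∫ a, q a ^ (α + β) ∂μ)
        - (1 / (α * β)) * ψ (∫ a, p a ^ α * q a ^ β ∂μ) := by
  have hαβ : 0 < α + β := by linarith
  set r : ℝ := (α + β) / α with hr
  set s : ℝ := (α + β) / β with hs
  have hrpos : 0 < r := by positivity
  have hspos : 0 < s := by positivity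
  have hconj : r.HolderConjugate s := by
    constructor
    · rw [hr, hs, inv_one, inv_div, inv_div, ← add_div, div_self hαβ.ne']
    · exact hrpos
    · exact hspos
  -- Memℒp facts
  have memp : ∀ (f : A → ℝ) (c : ℝ), 0 < c → Measurable f → (∀ a, 0 ≤ f a) →
      Integrable (fun a => f a ^ (α + β)) μ →
      MemLp (fun a => f a ^ c) (ENNReal.ofReal ((α + β) / c)) μ := by
    intro f c hc hfm hf0 hint
    have hcd : 0 < (α + β) / c := by positivity
    have A0 : ENNReal.ofReal ((α + β) / c) ≠ 0 := by
      rwa [Ne, ENNReal.ofReal_eq_zero, not_le]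
    have B0 : ENNReal.ofReal ((α + β) / c) ≠ ⊤ := ENNReal.ofReal_ne_top
    rw [← memLp_norm_rpow_iff _ A0 B0, ENNReal.toReal_ofReal hcd.le,
      ENNReal.div_self A0 B0, memLp_one_iff_integrable]
    · apply hint.congr
      filter_upwards with a
      rw [Real.norm_of_nonneg (Real.rpow_nonneg (hf0 a) c),
        ← Real.rpow_mul (hf0 a)]
      congr 1
      field_simp
    · have : Measurable fun a => f a ^ c := by fun_prop
      exact this.aestronglyMeasurable
  have hpmem := memp p α hα hp hp0 hpint
  have hqmem := memp q β hβ hq hq0 hqint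
  rw [show (α + β) / α = r from rfl] at hpmem
  rw [show (α + β) / β = s from rfl] at hqmem
  -- Hölder
  have holder := MeasureTheory.integral_mul_le_Lp_mul_Lq_of_nonneg hconj
    (f := fun a => p a ^ α) (g := fun a => q a ^ β)
    (Filter.Eventually.of_forall fun a => Real.rpow_nonneg (hp0 a) α)
    (Filter.Eventually.of_forall fun a => Real.rpow_nonneg (hq0 a) β)
    hpmem hqmem
  have hprw : ∀ a, (p a ^ α) ^ r = p a ^ (α + β) := by
    intro a
    rw [← Real.rpow_mul (hp0 a), hr, mul_div_cancel₀ _ hα.ne']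
  have hqrw : ∀ a, (q a ^ β) ^ s = q a ^ (α + β) := by
    intro a
    rw [← Real.rpow_mul (hq0 a), hs, mul_div_cancel₀ _ hβ.ne']
  simp only [hprw, hqrw] at holder
  set Ip := ∫ a, p a ^ (α + β) ∂μ
  set Iq := ∫ a, q a ^ (α + β) ∂μ
  set J := ∫ a, p a ^ α * q a ^ β ∂μ
  -- take logs
  have hlog : Real.log J ≤ (1 / r) * Real.log Ip + (1 / s) * Real.log Iq := by
    calc Real.log J ≤ Real.log (Ip ^ (1 / r) * Iq ^ (1 / s)) :=
          Real.log_le_log hpqpos holder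
      _ = (1 / r) * Real.log Ip + (1 / s) * Real.log Iq := by
          rw [Real.log_mul (by positivity) (by positivity)]
          rw [Real.log_rpow hppos, Real.log_rpow hqpos]
  -- convexity + monotonicity of Ψ
  have hwsum : 1 / r + 1 / s = 1 := by
    rw [hr, hs]; field_simp
  have hΨJ : ψ J ≤ (1 / r) * ψ Ip + (1 / s) * ψ Iq := by
    have h1 : ψ J = ψ (Real.exp (Real.log J)) := by rw [Real.exp_log hpqpos]
    have h2 := hΨmono hlog
    have h3 := hΨconv.2 (Set.mem_univ (Real.log Ip)) (Set.mem_univ (Real.log Iq))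
      (by positivity : (0:ℝ) ≤ 1 / r) (by positivity : (0:ℝ) ≤ 1 / s) hwsum
    simp only [smul_eq_mul] at h3
    rw [Real.exp_log hppos, Real.exp_log hqpos] at h3
    rw [h1]
    exact le_trans h2 h3
  have h1r : 1 / r = α / (α + β) := by rw [hr]; field_simp
  have h1s : 1 / s = β / (α + β) := by rw [hs]; field_simp
  rw [h1r, h1s] at hΨJ
  have key : (1 / (α * β)) * ψ J ≤
      (1 / (β * (α + β))) * ψ Ip + (1 / (α * (α + β))) * ψ Iq := by
    have := mul_le_mul_of_nonneg_left hΨJ (by positivity : (0:ℝ) ≤ 1 / (α * β))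
    calc (1 / (α * β)) * ψ J ≤ (1 / (α * β)) * (α / (α + β) * ψ Ip + β / (α + β) * ψ Iq) := this
      _ = (1 / (β * (α + β))) * ψ Ip + (1 / (α * (α + β))) * ψ Iq := by
          field_simp
  linarith
end

section
/- Let a < 0 and suppose Ψ(x) := ψ(e^x) is nondecreasing and convex. Then the map p ↦ ψ(‖p‖_a^a) = ψ(Σᵢ pᵢ^a) is convex on the set of vectors with strictly positive entries. Likewise, if a > 1 and ψ itself is nondecreasing and convex, then p ↦ ψ(Σᵢ pᵢ^a) is convex. -/
open Finset

private lemma pos_set_convex (n : ℕ) : Convex ℝ {p : Fin n → ℝ | ∀ i, 0 < p i} := by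
  have : {p : Fin n → ℝ | ∀ i, 0 < p i} = Set.univ.pi (fun _ => Set.Ioi (0:ℝ)) := by
    ext p; simp [Set.mem_pi]
  rw [this]
  exact convex_pi fun i _ => convex_Ioi 0

private lemma holder_key {n : ℕ} {a : ℝ} (ha : a < 0)
    {x y : Fin n → ℝ} (hx : ∀ i, 0 < x i) (hy : ∀ i, 0 < y i)
    {l m : ℝ} (hl : 0 < l) (hm : 0 < m) (hlm : l + m = 1) :
    ∑ i, (l * x i + m * y i) ^ a ≤ (∑ i, x i ^ a) ^ l * (∑ i, y i ^ a) ^ m := by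
  have hswap : ∀ (t : ℝ), 0 < t → (t ^ l) ^ a = (t ^ a) ^ l := by
    intro t ht
    rw [← Real.rpow_mul ht.le, mul_comm, Real.rpow_mul ht.le]
  have hswap' : ∀ (t : ℝ), 0 < t → (t ^ m) ^ a = (t ^ a) ^ m := by
    intro t ht
    rw [← Real.rpow_mul ht.le, mul_comm, Real.rpow_mul ht.le]
  have step1 : ∑ i, (l * x i + m * y i) ^ a ≤ ∑ i, (x i ^ a) ^ l * (y i ^ a) ^ m := by
    apply Finset.sum_le_sum
    intro i _
    have hgm : x i ^ l * y i ^ m ≤ l * x i + m * y i :=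
      Real.geom_mean_le_arith_mean2_weighted hl.le hm.le (hx i).le (hy i).le hlm
    have hpos : 0 < x i ^ l * y i ^ m :=
      mul_pos (Real.rpow_pos_of_pos (hx i) l) (Real.rpow_pos_of_pos (hy i) m)
    calc (l * x i + m * y i) ^ a ≤ (x i ^ l * y i ^ m) ^ a :=
          Real.rpow_le_rpow_of_nonpos hpos hgm ha.le
      _ = (x i ^ a) ^ l * (y i ^ a) ^ m := by
          rw [Real.mul_rpow (Real.rpow_nonneg (hx i).le l) (Real.rpow_nonneg (hy i).le m),
            hswap _ (hx i), hswap' _ (hy i)]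
  have hl1 : l < 1 := by linarith
  have hpq : Real.HolderConjugate (1 / l) (1 / m) := by
    exact Real.holderConjugate_one_div hl hm hlm
  have H := Real.inner_le_Lp_mul_Lq_of_nonneg (s := Finset.univ)
      (f := fun i => (x i ^ a) ^ l) (g := fun i => (y i ^ a) ^ m) hpq
      (fun i _ => Real.rpow_nonneg (Real.rpow_nonneg (hx i).le a) l)
      (fun i _ => Real.rpow_nonneg (Real.rpow_nonneg (hy i).le a) m)
  refine step1.trans (le_of_le_of_eq H ?_)
  rw [one_div_one_div, one_div_one_div]
  congr 1
  · congr 1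
    apply Finset.sum_congr rfl
    intro i _
    rw [← Real.rpow_mul (Real.rpow_nonneg (hx i).le a), mul_one_div_cancel hl.ne',
      Real.rpow_one]
  · congr 1
    apply Finset.sum_congr rfl
    intro i _
    rw [← Real.rpow_mul (Real.rpow_nonneg (hy i).le a), mul_one_div_cancel hm.ne',
      Real.rpow_one]

theorem psi_norm_convex
    (n : ℕ) (a : ℝ) (ψ : ℝ → ℝ) :
    ((a < 0 → Monotone (fun x : ℝ => ψ (Real.exp x)) →
        ConvexOn ℝ Set.univ (fun x : ℝ => ψ (Real.exp x)) →
        ConvexOn ℝ {p : Fin n → ℝ | ∀ i, 0 < p i} (fun p => ψ (∑ i, p i ^ a)))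
      ∧ (1 < a → Monotone ψ → ConvexOn ℝ Set.univ ψ →
        ConvexOn ℝ {p : Fin n → ℝ | ∀ i, 0 < p i} (fun p => ψ (∑ i, p i ^ a)))) := by
  constructor
  · -- a < 0 case
    intro ha hmono hconv
    rcases Nat.eq_zero_or_pos n with hn | hn
    · subst hn
      simpa using convexOn_const (ψ 0) (pos_set_convex 0)
    refine ⟨pos_set_convex n, ?_⟩
    intro x hx y hy l m hl hm hlm
    simp only [Set.mem_setOf_eq] at hx hy
    have hSx : 0 < ∑ i, x i ^ a :=
      Finset.sum_pos (fun i _ => Real.rpow_pos_of_pos (hx i) a)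
        (Finset.univ_nonempty_iff.2 (Fin.pos_iff_nonempty.mp hn))
    have hSy : 0 < ∑ i, y i ^ a :=
      Finset.sum_pos (fun i _ => Real.rpow_pos_of_pos (hy i) a)
        (Finset.univ_nonempty_iff.2 (Fin.pos_iff_nonempty.mp hn))
    have happ : ∀ i, (l • x + m • y) i = l * x i + m * y i := fun i => rfl
    rcases eq_or_lt_of_le hl with hl0 | hl0
    · have hm1 : m = 1 := by linarith
      have : l • x + m • y = y := by
        funext i; rw [happ, ← hl0, hm1]; ring
      rw [this, ← hl0, hm1]; simp
    rcases eq_or_lt_of_le hm with hm0 | hm0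
    · have hl1 : l = 1 := by linarith
      have : l • x + m • y = x := by
        funext i; rw [happ, ← hm0, hl1]; ring
      rw [this, ← hm0, hl1]; simp
    -- main case
    have key : ∑ i, (l • x + m • y) i ^ a ≤ (∑ i, x i ^ a) ^ l * (∑ i, y i ^ a) ^ m := by
      simp only [happ]
      exact holder_key ha hx hy hl0 hm0 hlm
    have hSmid : 0 < ∑ i, (l • x + m • y) i ^ a := by
      apply Finset.sum_pos (fun i _ => Real.rpow_pos_of_pos ?_ a)
        (Finset.univ_nonempty_iff.2 (Fin.pos_iff_nonempty.mp hn))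
      rw [happ]
      exact add_pos (mul_pos hl0 (hx i)) (mul_pos hm0 (hy i))
    have hlog : Real.log (∑ i, (l • x + m • y) i ^ a)
        ≤ l * Real.log (∑ i, x i ^ a) + m * Real.log (∑ i, y i ^ a) := by
      calc Real.log (∑ i, (l • x + m • y) i ^ a)
          ≤ Real.log ((∑ i, x i ^ a) ^ l * (∑ i, y i ^ a) ^ m) :=
            Real.log_le_log hSmid key
        _ = l * Real.log (∑ i, x i ^ a) + m * Real.log (∑ i, y i ^ a) := by
            rw [Real.log_mul (Real.rpow_pos_of_pos hSx l).ne' (Real.rpow_pos_of_pos hSy m).ne',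
              Real.log_rpow hSx, Real.log_rpow hSy]
    calc ψ (∑ i, (l • x + m • y) i ^ a)
        = ψ (Real.exp (Real.log (∑ i, (l • x + m • y) i ^ a))) := by
          rw [Real.exp_log hSmid]
      _ ≤ ψ (Real.exp (l * Real.log (∑ i, x i ^ a) + m * Real.log (∑ i, y i ^ a))) :=
          hmono hlog
      _ ≤ l * ψ (Real.exp (Real.log (∑ i, x i ^ a)))
            + m * ψ (Real.exp (Real.log (∑ i, y i ^ a))) :=
          hconv.2 (Set.mem_univ _) (Set.mem_univ _) hl hm hlm
      _ = l * ψ (∑ i, x i ^ a) + m * ψ (∑ i, y i ^ a) := by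
          rw [Real.exp_log hSx, Real.exp_log hSy]
  · -- 1 < a case
    intro ha hmono hconv
    refine ⟨pos_set_convex n, ?_⟩
    intro x hx y hy l m hl hm hlm
    simp only [Set.mem_setOf_eq] at hx hy
    have key : ∑ i, (l • x + m • y) i ^ a
        ≤ l * ∑ i, x i ^ a + m * ∑ i, y i ^ a := by
      rw [Finset.mul_sum, Finset.mul_sum, ← Finset.sum_add_distrib]
      apply Finset.sum_le_sum
      intro i _
      exact (convexOn_rpow ha.le).2 (Set.mem_Ici.2 (hx i).le) (Set.mem_Ici.2 (hy i).le)
        hl hm hlm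
    calc ψ (∑ i, (l • x + m • y) i ^ a)
        ≤ ψ (l * ∑ i, x i ^ a + m * ∑ i, y i ^ a) := hmono key
      _ ≤ l * ψ (∑ i, x i ^ a) + m * ψ (∑ i, y i ^ a) :=
          hconv.2 (Set.mem_univ _) (Set.mem_univ _) hl hm hlm
end

section
/- Let α < 0, β > 0 with α + β > 1, and suppose ψ is nondecreasing and convex, with Ψ(x) := ψ(e^x) also nondecreasing and convex. Then the GAB entropy ε_GAB^{(α,β),ψ}(p) = (1/(αβ))·ψ(Σᵢ pᵢ^α) − (1/(β(α+β)))·ψ(Σᵢ pᵢ^(α+β)) is concave on the set of probability vectors with strictly positive entries. -/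
open Finset

/-- `x ^ q` is convex on `(0, ∞)` for `q < 0`. -/
lemma rpow_convexOn_Ioi_of_neg {q : ℝ} (hq : q < 0) :
    ConvexOn ℝ (Set.Ioi (0 : ℝ)) (fun x : ℝ => x ^ q) := by
  have hint : interior (Set.Ioi (0 : ℝ)) = Set.Ioi 0 := interior_Ioi
  refine convexOn_of_hasDerivWithinAt2_nonneg (f' := fun x => q * x ^ (q - 1))
    (f'' := fun x => q * ((q - 1) * x ^ (q - 1 - 1))) (convex_Ioi 0) ?_ ?_ ?_ ?_
  · intro x hx
    exact (Real.continuousAt_rpow_const x q (Or.inl (ne_of_gt hx))).continuousWithinAt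
  · intro x hx
    rw [hint] at hx ⊢
    exact (Real.hasDerivAt_rpow_const (Or.inl (ne_of_gt hx))).hasDerivWithinAt
  · intro x hx
    rw [hint] at hx ⊢
    have h := (Real.hasDerivAt_rpow_const (p := q - 1) (Or.inl (ne_of_gt hx))).const_mul q
    exact h.hasDerivWithinAt
  · intro x hx
    rw [hint] at hx
    have hx' : (0 : ℝ) < x := hx
    have h1 : (0 : ℝ) ≤ x ^ (q - 1 - 1) := Real.rpow_nonneg hx'.le _
    have h2 : (0:ℝ) ≤ q * (q - 1) := (mul_pos_of_neg_of_neg hq (by linarith)).le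
    show (0:ℝ) ≤ q * ((q - 1) * x ^ (q - 1 - 1))
    nlinarith [mul_nonneg h2 h1]

/-- `x ^ q` is convex on `(0, ∞)` for `1 ≤ q`. -/
lemma rpow_convexOn_Ioi_of_one_le {q : ℝ} (hq : 1 ≤ q) :
    ConvexOn ℝ (Set.Ioi (0 : ℝ)) (fun x : ℝ => x ^ q) :=
  (convexOn_rpow hq).subset (fun x hx => Set.mem_Ici.mpr (le_of_lt hx)) (convex_Ioi 0)

/-- Sum of convex functions over a finset is convex. -/
lemma convexOn_finset_sum {E : Type*} [AddCommGroup E] [Module ℝ E]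
    {ι : Type*} (t : Finset ι) {s : Set E} (hs : Convex ℝ s) {f : ι → E → ℝ}
    (h : ∀ i ∈ t, ConvexOn ℝ s (f i)) :
    ConvexOn ℝ s (fun x => ∑ i ∈ t, f i x) := by
  induction t using Finset.cons_induction with
  | empty => simpa using convexOn_const 0 hs
  | cons a t ha ih =>
    simp only [Finset.sum_cons]
    exact (h a (Finset.mem_cons_self a t)).add
      (ih fun i hi => h i (Finset.mem_cons_of_mem hi))

theorem gab_entropy_concave
    (n : ℕ) (α β : ℝ) (hα : α < 0) (hβ : 0 < β) (hαβ : 1 < α + β)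
    (ψ : ℝ → ℝ) (hmono : Monotone ψ) (hconv : ConvexOn ℝ Set.univ ψ)
    (hΨmono : Monotone (fun x : ℝ => ψ (Real.exp x)))
    (hΨconv : ConvexOn ℝ Set.univ (fun x : ℝ => ψ (Real.exp x))) :
    ConcaveOn ℝ {p : Fin n → ℝ | (∀ i, 0 < p i) ∧ ∑ i, p i = 1}
      (fun p => (1 / (α * β)) * ψ (∑ i, p i ^ α)
        - (1 / (β * (α + β))) * ψ (∑ i, p i ^ (α + β))) := by
  set S : Set (Fin n → ℝ) := {p : Fin n → ℝ | (∀ i, 0 < p i) ∧ ∑ i, p i = 1}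
  have hSconv : Convex ℝ S := by
    intro x hx y hy a b ha hb hab
    refine ⟨fun i => ?_, ?_⟩
    · rcases ha.lt_or_eq with ha' | ha'
      · exact add_pos_of_pos_of_nonneg (mul_pos ha' (hx.1 i))
          (mul_nonneg hb (hy.1 i).le)
      · have hb1 : b = 1 := by linarith
        have : (a • x + b • y) i = y i := by simp [← ha', hb1]
        simpa [this] using hy.1 i
    · simp only [Pi.add_apply, Pi.smul_apply, smul_eq_mul]
      rw [Finset.sum_add_distrib, ← Finset.mul_sum, ← Finset.mul_sum, hx.2, hy.2]
      simpa using hab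
  -- convexity of p ↦ ∑ i, p i ^ q on S, for suitable q
  have key : ∀ q : ℝ, ConvexOn ℝ (Set.Ioi (0:ℝ)) (fun x : ℝ => x ^ q) →
      ConvexOn ℝ S (fun p : Fin n → ℝ => ψ (∑ i, p i ^ q)) := by
    intro q hq
    have hsum : ConvexOn ℝ S (fun p : Fin n → ℝ => ∑ i, p i ^ q) := by
      refine convexOn_finset_sum Finset.univ hSconv (fun i _ => ?_)
      refine ⟨hSconv, fun x hx y hy a b ha hb hab => ?_⟩
      exact hq.2 (hx.1 i) (hy.1 i) ha hb hab
    refine ⟨hSconv, fun x hx y hy a b ha hb hab => ?_⟩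
    calc ψ (∑ i, (a • x + b • y) i ^ q)
        ≤ ψ (a • (∑ i, x i ^ q) + b • (∑ i, y i ^ q)) :=
          hmono (hsum.2 hx hy ha hb hab)
      _ ≤ a • ψ (∑ i, x i ^ q) + b • ψ (∑ i, y i ^ q) :=
          hconv.2 (Set.mem_univ _) (Set.mem_univ _) ha hb hab
  have hc1 : ConvexOn ℝ S (fun p : Fin n → ℝ => ψ (∑ i, p i ^ α)) :=
    key α (rpow_convexOn_Ioi_of_neg hα)
  have hc2 : ConvexOn ℝ S (fun p : Fin n → ℝ => ψ (∑ i, p i ^ (α + β))) :=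
    key (α + β) (rpow_convexOn_Ioi_of_one_le hαβ.le)
  -- signs
  have hs1 : (1 : ℝ) / (α * β) ≤ 0 := by
    apply div_nonpos_of_nonneg_of_nonpos
    · norm_num
    · exact (mul_nonpos_iff.mpr (Or.inr ⟨hα.le, hβ.le⟩))
  have hs2 : (0 : ℝ) ≤ 1 / (β * (α + β)) := by
    positivity
  have t1 : ConcaveOn ℝ S (fun p : Fin n → ℝ => (1 / (α * β)) * ψ (∑ i, p i ^ α)) := by
    have h := (hc1.smul (c := -(1 / (α * β))) (by linarith)).neg
    simpa only [Pi.neg_def, smul_eq_mul, neg_mul, neg_neg] using h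
  have t2 : ConcaveOn ℝ S
      (fun p : Fin n → ℝ => -((1 / (β * (α + β))) * ψ (∑ i, p i ^ (α + β)))) := by
    have h := (hc2.smul (c := 1 / (β * (α + β))) hs2).neg
    simpa only [Pi.neg_def, smul_eq_mul] using h
  have h := t1.add t2
  simpa only [Pi.add_def, sub_eq_add_neg] using h
end
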